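/- Let ξ_n be an r_j-random walk on Ω_M. Then P(ξ_n = u) = −f_k^n/M^k + (M−1) Σ_{j=k+1}^∞ f_j^n/M^j for |u| = k > 0, where f_k = 1 − h(k−1) − r_k/(M−1) and h(L) = Σ_{j>L} r_j. Consequently, P(|ξ_n| = k) = ((M−1)/M) Σ_{j=0}^∞ (f_{j+k+1}^n − f_{j+k}^n)/M^j and P(|ξ_n| > L) = ((M−1)/M) Σ_{j=0}^∞ (1 − f_{L+j+1}^n)/M^j. -/

import Mathlib

open MeasureTheory Filter
open scoped ENNReal NNReal BigOperators Topology

set_option maxHeartbeats 1000000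

noncomputable section

/-- The hierarchical group of order `M`: finitely supported sequences with entries in `ZMod M`,
with componentwise addition mod `M`. -/
abbrev Omega (M : ℕ) := ℕ →₀ ZMod M

/-- The hierarchical norm: `|x| = max {i : x_i ≠ 0}` (coordinates indexed from 1), `|0| = 0`. -/
def hnorm {M : ℕ} (x : Omega M) : ℕ := x.support.sup (· + 1)

instance {M : ℕ} : MeasurableSpace (Omega M) := ⊤

/-- The `n`-step distribution of the random walk with step distribution `ρ`, started at `0`. -/
def walk {M : ℕ} (ρ : PMF (Omega M)) : ℕ → PMF (Omega M)
  | 0 => PMF.pure 0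
  | n + 1 => (walk ρ n).bind fun x => ρ.map (x + ·)

/-- The eigenvalues of the transition operator: `f_k = 1 - h(k-1) - r_k/(M-1)`, where
`h(k-1) = Σ_{j ≥ k} r_j`. -/
def fcoef (M : ℕ) (r : ℕ → ℝ) (k : ℕ) : ℝ :=
  1 - (∑' j : ℕ, r (k + j)) - r k / ((M : ℝ) - 1)

namespace HRW
variable {M : ℕ}

lemma hnorm_le_iff {x : Omega M} {L : ℕ} : hnorm x ≤ L ↔ ∀ i ∈ x.support, i < L := by
  simp only [hnorm, Finset.sup_le_iff]
  exact forall₂_congr fun i _ => by omega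

lemma hnorm_eq_zero_iff {x : Omega M} : hnorm x = 0 ↔ x = 0 := by
  rw [← Nat.le_zero, hnorm_le_iff]
  simp only [Finsupp.mem_support_iff]
  constructor
  · intro h; ext i
    by_contra hne
    exact absurd (h i hne) (by omega)
  · intro h i hi; simp [h] at hi

lemma hnorm_neg (x : Omega M) : hnorm (-x) = hnorm x := by
  simp [hnorm, Finsupp.support_neg]

lemma hnorm_add_le (x y : Omega M) : hnorm (x + y) ≤ max (hnorm x) (hnorm y) := by
  rw [hnorm_le_iff]
  intro i hi
  have := Finsupp.support_add (g₁ := x) (g₂ := y) hi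
  rw [Finset.mem_union] at this
  rcases this with h | h
  · have : i + 1 ≤ hnorm x := Finset.le_sup (f := (· + 1)) h
    omega
  · have : i + 1 ≤ hnorm y := Finset.le_sup (f := (· + 1)) h
    omega

lemma hnorm_sub_le (x y : Omega M) : hnorm (x - y) ≤ max (hnorm x) (hnorm y) := by
  rw [sub_eq_add_neg]
  simpa [hnorm_neg] using hnorm_add_le x (-y)

lemma hnorm_add_eq_left {x y : Omega M} (h : hnorm y < hnorm x) : hnorm (x + y) = hnorm x := by
  refine le_antisymm (by simpa [Nat.max_eq_left h.le] using hnorm_add_le x y) ?_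
  have h2 : hnorm x ≤ max (hnorm (x + y)) (hnorm y) := by
    have := hnorm_add_le (x + y) (-y)
    simpa [hnorm_neg] using this
  omega

lemma hnorm_sub_eq_left {x y : Omega M} (h : hnorm y < hnorm x) : hnorm (x - y) = hnorm x := by
  rw [sub_eq_add_neg]; exact hnorm_add_eq_left (by simpa [hnorm_neg])

def ballEquiv (M L : ℕ) : {x : Omega M // hnorm x ≤ L} ≃ (↑(Finset.range L : Finset ℕ) → ZMod M) :=
  ((Equiv.subtypeEquivRight (fun x => by
      rw [hnorm_le_iff]
      simp [Set.subset_def])).trans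
    (Finsupp.restrictSupportEquiv (↑(Finset.range L) : Set ℕ) (ZMod M))).trans
    Finsupp.equivFunOnFinite

lemma ball_finite (M L : ℕ) [NeZero M] : Set.Finite {x : Omega M | hnorm x ≤ L} := by
  have : Finite {x : Omega M // hnorm x ≤ L} := Finite.of_equiv _ (ballEquiv M L).symm
  exact this

variable (M) in
def ballF [NeZero M] (L : ℕ) : Finset (Omega M) := (ball_finite M L).toFinset

lemma mem_ballF [NeZero M] {L : ℕ} {x : Omega M} : x ∈ ballF M L ↔ hnorm x ≤ L := by
  simp [ballF]

lemma card_ballF [NeZero M] (L : ℕ) : (ballF M L).card = M ^ L := by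
  have h1 : Nat.card {x : Omega M // hnorm x ≤ L} = M ^ L := by
    rw [Nat.card_congr (ballEquiv M L), Nat.card_fun, Nat.card_zmod]
    congr 1
    rw [Nat.card_eq_fintype_card, Fintype.card_coe, Finset.card_range]
  haveI := (ball_finite M L).fintype
  have h2 : (ballF M L).card = Nat.card ↥{x : Omega M | hnorm x ≤ L} := by
    rw [Nat.card_eq_fintype_card]
    exact (ball_finite M L).card_toFinset
  rw [← h1, h2]
  rfl

lemma ballF_mono [NeZero M] {L L' : ℕ} (h : L ≤ L') : ballF M L ⊆ ballF M L' := by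
  intro x hx
  rw [mem_ballF] at *
  omega

lemma ballF_zero [NeZero M] : ballF M 0 = {0} := by
  ext x
  simp [mem_ballF, Nat.le_zero, hnorm_eq_zero_iff]


section An
variable {M : ℕ}

def Af (M : ℕ) (L : ℕ) (u : Omega M) : ℝ := if hnorm u ≤ L then ((M:ℝ)^L)⁻¹ else 0

def Df (M : ℕ) (j : ℕ) (u : Omega M) : ℝ := Af M j u - Af M (j+1) u

lemma M_pos (hM : 2 ≤ M) : (0:ℝ) < M := by positivity

lemma M1_pos (hM : 2 ≤ M) : (0:ℝ) < (M:ℝ) - 1 := by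
  have : (2:ℝ) ≤ M := by exact_mod_cast hM
  linarith

lemma Af_nonneg (hM : 2 ≤ M) (L : ℕ) (u : Omega M) : 0 ≤ Af M L u := by
  unfold Af; have := M_pos hM; positivity

lemma Af_le (hM : 2 ≤ M) (L : ℕ) (u : Omega M) : Af M L u ≤ ((M:ℝ)⁻¹)^L := by
  unfold Af
  rw [← inv_pow]
  split
  · exact le_rfl
  · positivity

lemma abs_Df_le (hM : 2 ≤ M) (j : ℕ) (u : Omega M) : |Df M j u| ≤ 2 * ((M:ℝ)⁻¹)^j := by
  have h1 := Af_nonneg hM j u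
  have h2 := Af_nonneg hM (j+1) u
  have h3 := Af_le hM j u
  have h4 := Af_le hM (j+1) u
  have hMi : ((M:ℝ)⁻¹)^(j+1) ≤ ((M:ℝ)⁻¹)^j := by
    apply pow_le_pow_of_le_one (by positivity) _ (by omega)
    rw [inv_le_one_iff₀]
    right
    exact_mod_cast Nat.one_le_iff_ne_zero.mpr (by omega)
  rw [Df, abs_sub_le_iff]
  constructor <;> nlinarith

lemma geo_summable (hM : 2 ≤ M) : Summable fun j : ℕ => ((M:ℝ)⁻¹)^j := by
  apply summable_geometric_of_lt_one (by positivity)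
  rw [inv_lt_one_iff₀]
  right
  exact_mod_cast hM.trans_lt' one_lt_two

lemma geo_tsum (hM : 2 ≤ M) : ∑' j : ℕ, ((M:ℝ)⁻¹)^j = (1 - (M:ℝ)⁻¹)⁻¹ := by
  apply tsum_geometric_of_lt_one (by positivity)
  rw [inv_lt_one_iff₀]
  right
  exact_mod_cast hM.trans_lt' one_lt_two

lemma summable_of_geo_bound (hM : 2 ≤ M) {c : ℕ → ℝ} (C : ℝ)
    (h : ∀ j, |c j| ≤ C * ((M:ℝ)⁻¹)^j) : Summable c := by
  apply Summable.of_abs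
  apply Summable.of_nonneg_of_le (fun j => abs_nonneg _) h
  exact (geo_summable hM).mul_left C

end An

section Rho
variable {M : ℕ} (ρ : PMF (Omega M)) (r : ℕ → ℝ)

def rho' : Omega M → ℝ := fun x => (ρ x).toReal

lemma rho'_nonneg (x : Omega M) : 0 ≤ rho' ρ x := ENNReal.toReal_nonneg

lemma rho'_summable : Summable (rho' ρ) := by
  apply ENNReal.summable_toReal
  rw [ρ.tsum_coe]
  exact ENNReal.one_ne_top

lemma rho'_tsum : ∑' x, rho' ρ x = 1 := by
  have h := ENNReal.tsum_toReal_eq (fun x => ρ.apply_ne_top x)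
  unfold rho'
  rw [← h, ρ.tsum_coe, ENNReal.toReal_one]

lemma rho'_sub_summable (u : Omega M) : Summable (fun x => rho' ρ (u - x)) :=
  (Equiv.subLeft u).summable_iff.mpr (rho'_summable ρ)

lemma rho'_sub_tsum (u : Omega M) : ∑' x, rho' ρ (u - x) = 1 := by
  rw [← rho'_tsum ρ]
  exact (Equiv.subLeft u).tsum_eq (rho' ρ)

lemma rho'_apply (hM : 2 ≤ M) (hr0 : ∀ j, 0 ≤ r j)
    (hρ : ∀ y : Omega M, y ≠ 0 →
      ρ y = ENNReal.ofReal (r (hnorm y) / ((M : ℝ) ^ (hnorm y - 1) * ((M : ℝ) - 1))))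
    {u : Omega M} (hu : u ≠ 0) :
    rho' ρ u = r (hnorm u) / ((M : ℝ) ^ (hnorm u - 1) * ((M : ℝ) - 1)) := by
  rw [rho', hρ u hu, ENNReal.toReal_ofReal]
  have := M_pos hM
  have := M1_pos hM
  have := hr0 (hnorm u)
  positivity

lemma rho'_zero (hρ0 : ρ 0 = 0) : rho' ρ 0 = 0 := by simp [rho', hρ0]

variable [NeZero M]

lemma sum_rho'_ballF (hM : 2 ≤ M) (hr0 : ∀ j, 0 ≤ r j) (hρ0 : ρ 0 = 0)
    (hρ : ∀ y : Omega M, y ≠ 0 →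
      ρ y = ENNReal.ofReal (r (hnorm y) / ((M : ℝ) ^ (hnorm y - 1) * ((M : ℝ) - 1)))) :
    ∀ L : ℕ, ∑ x ∈ ballF M L, rho' ρ x = ∑ m ∈ Finset.range L, r (m+1) := by
  intro L
  induction L with
  | zero => simp [ballF_zero, rho'_zero ρ hρ0]
  | succ L ih =>
    have hsub : ballF M L ⊆ ballF M (L+1) := ballF_mono (by omega)
    rw [← Finset.sum_sdiff hsub, ih, Finset.sum_range_succ, add_comm (∑ m ∈ Finset.range L, r (m+1))]
    congr 1
    have hval : ∀ x ∈ ballF M (L+1) \ ballF M L,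
        rho' ρ x = r (L+1) / ((M:ℝ)^L * ((M:ℝ) - 1)) := by
      intro x hx
      rw [Finset.mem_sdiff, mem_ballF, mem_ballF] at hx
      have hn : hnorm x = L + 1 := by omega
      have hx0 : x ≠ 0 := by
        intro h
        rw [h] at hn
        rw [hnorm_eq_zero_iff.mpr rfl] at hn
        omega
      rw [rho'_apply ρ r hM hr0 hρ hx0, hn]
      norm_num
    rw [Finset.sum_congr rfl hval, Finset.sum_const]
    have hcard : (ballF M (L+1) \ ballF M L).card = M^(L+1) - M^L := by
      rw [Finset.card_sdiff_of_subset hsub, card_ballF, card_ballF]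
    rw [hcard, nsmul_eq_mul]
    have hle : (M:ℕ)^L ≤ M^(L+1) := Nat.pow_le_pow_right (by omega) (by omega)
    have hcast : ((M^(L+1) - M^L : ℕ) : ℝ) = (M:ℝ)^L * ((M:ℝ) - 1) := by
      push_cast [hle]
      ring
    rw [hcast]
    have h1 := M_pos hM
    have h2 := M1_pos hM
    field_simp

lemma sum_rho'_shift_le {u : Omega M} {L : ℕ} (hu : hnorm u ≤ L) :
    ∑ x ∈ ballF M L, rho' ρ (u - x) = ∑ x ∈ ballF M L, rho' ρ x := by
  apply Finset.sum_bij' (fun x _ => u - x) (fun y _ => u - y)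
  · intro x hx
    rw [mem_ballF] at *
    exact le_trans (hnorm_sub_le u x) (by omega)
  · intro y hy
    rw [mem_ballF] at *
    exact le_trans (hnorm_sub_le u y) (by omega)
  · intro x _; simp
  · intro y _; simp
  · intro x _; rfl

lemma sum_rho'_shift_gt (hM : 2 ≤ M) (hr0 : ∀ j, 0 ≤ r j)
    (hρ : ∀ y : Omega M, y ≠ 0 →
      ρ y = ENNReal.ofReal (r (hnorm y) / ((M : ℝ) ^ (hnorm y - 1) * ((M : ℝ) - 1))))
    {u : Omega M} {L : ℕ} (hu : L < hnorm u) :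
    ∑ x ∈ ballF M L, rho' ρ (u - x) = (M:ℝ)^L * rho' ρ u := by
  have hu0 : u ≠ 0 := by
    intro h
    rw [h, hnorm_eq_zero_iff.mpr rfl] at hu
    omega
  have hval : ∀ x ∈ ballF M L, rho' ρ (u - x) = rho' ρ u := by
    intro x hx
    rw [mem_ballF] at hx
    have hn : hnorm (u - x) = hnorm u := hnorm_sub_eq_left (by omega)
    have hx0 : u - x ≠ 0 := by
      intro h
      rw [h, hnorm_eq_zero_iff.mpr rfl] at hn
      rw [← hn] at hu
      omega
    rw [rho'_apply ρ r hM hr0 hρ hx0, rho'_apply ρ r hM hr0 hρ hu0, hn]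
  rw [Finset.sum_congr rfl hval, Finset.sum_const, card_ballF, nsmul_eq_mul]
  push_cast
  ring

end Rho

section Er
variable (r : ℕ → ℝ)

lemma summable_r (hsummable : Summable fun j : ℕ => r (j + 1)) : Summable r :=
  (summable_nat_add_iff 1).mp hsummable

lemma summable_shift (hsummable : Summable fun j : ℕ => r (j + 1)) (k : ℕ) :
    Summable fun j : ℕ => r (k + j) := by
  have h : (fun j : ℕ => r (k + j)) = fun j : ℕ => r (j + k) := by
    funext j; rw [add_comm]
  rw [h]
  exact (summable_nat_add_iff k).mpr (summable_r r hsummable)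

lemma E_succ (hsummable : Summable fun j : ℕ => r (j + 1)) (k : ℕ) :
    (∑' j : ℕ, r (k + j)) = r k + ∑' j : ℕ, r (k + 1 + j) := by
  rw [Summable.tsum_eq_zero_add (summable_shift r hsummable k), add_zero]
  congr 1
  exact tsum_congr fun b => by congr 1; omega

lemma E_nonneg (hr0 : ∀ j, 0 ≤ r j) (k : ℕ) : 0 ≤ ∑' j : ℕ, r (k + j) :=
  tsum_nonneg fun j => hr0 _

lemma E_partial (hsummable : Summable fun j : ℕ => r (j + 1))
    (hsum : ∑' j : ℕ, r (j + 1) = 1) (L : ℕ) :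
    ∑ m ∈ Finset.range L, r (m + 1) = 1 - ∑' j : ℕ, r (L + 1 + j) := by
  have h := Summable.sum_add_tsum_nat_add (f := fun j => r (j + 1)) L hsummable
  rw [hsum] at h
  have h2 : (∑' j : ℕ, r (j + L + 1)) = ∑' j : ℕ, r (L + 1 + j) := by
    apply tsum_congr
    intro j
    congr 1
    omega
  rw [← h2]
  linarith [h]

lemma E_le_one (hr0 : ∀ j, 0 ≤ r j) (hsummable : Summable fun j : ℕ => r (j + 1))
    (hsum : ∑' j : ℕ, r (j + 1) = 1) (k : ℕ) :
    (∑' j : ℕ, r (k + 1 + j)) ≤ 1 := by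
  have h := E_partial r hsummable hsum k
  have h2 : 0 ≤ ∑ m ∈ Finset.range k, r (m + 1) :=
    Finset.sum_nonneg fun m _ => hr0 _
  linarith

lemma r_le_E (hr0 : ∀ j, 0 ≤ r j) (hsummable : Summable fun j : ℕ => r (j + 1)) (k : ℕ) :
    r (k + 1) ≤ ∑' j : ℕ, r (k + 1 + j) := by
  have h := E_succ r hsummable (k+1)
  have := E_nonneg r hr0 (k + 1 + 1)
  linarith

lemma abs_fcoef_le_one (hM : 2 ≤ M) (hr0 : ∀ j, 0 ≤ r j)
    (hsummable : Summable fun j : ℕ => r (j + 1))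
    (hsum : ∑' j : ℕ, r (j + 1) = 1) (k : ℕ) :
    |fcoef M r (k + 1)| ≤ 1 := by
  have hE0 := E_nonneg r hr0 (k + 1)
  have hE1 := E_le_one r hr0 hsummable hsum k
  have hrE := r_le_E r hr0 hsummable k
  have hr := hr0 (k + 1)
  have hM1 := M1_pos hM
  have hM2 : (2:ℝ) ≤ M := by exact_mod_cast hM
  have h1 : r (k + 1) / ((M:ℝ) - 1) ≤ r (k + 1) := by
    rw [div_le_iff₀ hM1]
    nlinarith
  have h0 : 0 ≤ r (k + 1) / ((M:ℝ) - 1) := by positivity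
  rw [fcoef, abs_le]
  constructor <;> nlinarith

lemma abs_fcoef_pow_le_one (hM : 2 ≤ M) (hr0 : ∀ j, 0 ≤ r j)
    (hsummable : Summable fun j : ℕ => r (j + 1))
    (hsum : ∑' j : ℕ, r (j + 1) = 1) (k n : ℕ) :
    |(fcoef M r (k + 1)) ^ n| ≤ 1 := by
  rw [abs_pow]
  exact pow_le_one₀ (abs_nonneg _) (abs_fcoef_le_one r hM hr0 hsummable hsum k)

end Er

section Conv
variable {M : ℕ} [NeZero M] (ρ : PMF (Omega M)) (r : ℕ → ℝ)

lemma Af_mul_zero_outside (L : ℕ) (u : Omega M) :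
    ∀ x ∉ ballF M L, Af M L x * rho' ρ (u - x) = 0 := by
  intro x hx
  rw [mem_ballF] at hx
  simp [Af, hx]

lemma summable_Af_mul (L : ℕ) (u : Omega M) :
    Summable fun x => Af M L x * rho' ρ (u - x) :=
  summable_of_ne_finset_zero (Af_mul_zero_outside ρ L u)

lemma conv_Af (hM : 2 ≤ M) (hr0 : ∀ j, 0 ≤ r j) (hρ0 : ρ 0 = 0)
    (hρ : ∀ y : Omega M, y ≠ 0 →
      ρ y = ENNReal.ofReal (r (hnorm y) / ((M : ℝ) ^ (hnorm y - 1) * ((M : ℝ) - 1))))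
    (hsummable : Summable fun j : ℕ => r (j + 1))
    (hsum : ∑' j : ℕ, r (j + 1) = 1) (L : ℕ) (u : Omega M) :
    ∑' x, Af M L x * rho' ρ (u - x)
      = (1 - ∑' j : ℕ, r (L + 1 + j)) * Af M L u
        + (if L < hnorm u then rho' ρ u else 0) := by
  rw [tsum_eq_sum (Af_mul_zero_outside ρ L u)]
  have hc : ∀ x ∈ ballF M L, Af M L x * rho' ρ (u - x) = ((M:ℝ)^L)⁻¹ * rho' ρ (u - x) := by
    intro x hx
    rw [mem_ballF] at hx
    simp [Af, hx]
  rw [Finset.sum_congr rfl hc, ← Finset.mul_sum]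
  by_cases h : hnorm u ≤ L
  · rw [sum_rho'_shift_le ρ h, sum_rho'_ballF ρ r hM hr0 hρ0 hρ L,
      E_partial r hsummable hsum L]
    rw [Af, if_pos h, if_neg (by omega)]
    ring
  · push_neg at h
    rw [sum_rho'_shift_gt ρ r hM hr0 hρ h]
    rw [Af, if_neg (by omega), if_pos h]
    have hMpow : ((M:ℝ)^L) ≠ 0 := by
      have := M_pos hM; positivity
    field_simp
    ring

lemma conv_Df (hM : 2 ≤ M) (hr0 : ∀ j, 0 ≤ r j) (hρ0 : ρ 0 = 0)
    (hρ : ∀ y : Omega M, y ≠ 0 →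
      ρ y = ENNReal.ofReal (r (hnorm y) / ((M : ℝ) ^ (hnorm y - 1) * ((M : ℝ) - 1))))
    (hsummable : Summable fun j : ℕ => r (j + 1))
    (hsum : ∑' j : ℕ, r (j + 1) = 1) (j : ℕ) (u : Omega M) :
    ∑' x, Df M j x * rho' ρ (u - x) = fcoef M r (j + 1) * Df M j u := by
  have hsplit : ∀ x, Df M j x * rho' ρ (u - x)
      = Af M j x * rho' ρ (u - x) - Af M (j+1) x * rho' ρ (u - x) := by
    intro x; rw [Df, sub_mul]
  rw [tsum_congr hsplit, Summable.tsum_sub (summable_Af_mul ρ j u) (summable_Af_mul ρ (j+1) u),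
    conv_Af ρ r hM hr0 hρ0 hρ hsummable hsum, conv_Af ρ r hM hr0 hρ0 hρ hsummable hsum]
  have hAB := E_succ r hsummable (j + 1)
  have hMpos := M_pos hM
  have hM1 := M1_pos hM
  have hMpow : ((M:ℝ)^j) ≠ 0 := by positivity
  simp only [fcoef, Df, Af]
  rcases lt_trichotomy (hnorm u) (j + 1) with hk | hk | hk
  · have h1 : hnorm u ≤ j := by omega
    rw [if_pos h1, if_pos (by omega : hnorm u ≤ j + 1), if_neg (by omega), if_neg (by omega)]
    rw [hAB]
    field_simp
    ring
  · have hu0 : u ≠ 0 := by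
      intro h0
      rw [h0, hnorm_eq_zero_iff.mpr rfl] at hk
      omega
    rw [if_neg (by omega), if_pos (by omega : hnorm u ≤ j + 1), if_pos (by omega),
      if_neg (by omega)]
    rw [rho'_apply ρ r hM hr0 hρ hu0, hk]
    have : j + 1 - 1 = j := by omega
    rw [this, hAB]
    field_simp
    ring
  · rw [if_neg (show ¬ hnorm u ≤ j by omega), if_neg (show ¬ hnorm u ≤ j + 1 by omega),
      if_pos (show j < hnorm u by omega), if_pos (show j + 1 < hnorm u by omega)]
    ring

end Conv

section Walk
variable {M : ℕ} (ρ : PMF (Omega M)) (r : ℕ → ℝ)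

lemma walk_zero_real (u : Omega M) : ((walk ρ 0) u).toReal = if u = 0 then 1 else 0 := by
  show ((PMF.pure 0 : PMF (Omega M)) u).toReal = _
  rw [PMF.pure_apply]
  split <;> simp

lemma walk_succ_real (n : ℕ) (u : Omega M) :
    ((walk ρ (n+1)) u).toReal = ∑' x, ((walk ρ n) x).toReal * rho' ρ (u - x) := by
  have hmap : ∀ x : Omega M, (ρ.map (x + ·)) u = ρ (u - x) := by
    intro x
    rw [PMF.map_apply]
    rw [tsum_eq_single (u - x)]
    · rw [if_pos (by abel)]
    · intro y hy
      rw [if_neg]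
      intro h
      apply hy
      rw [h]
      abel
  show (((walk ρ n).bind fun x => ρ.map (x + ·)) u).toReal = _
  rw [PMF.bind_apply,
    ENNReal.tsum_toReal_eq (fun x => ENNReal.mul_ne_top (PMF.apply_ne_top _ _) (PMF.apply_ne_top _ _))]
  apply tsum_congr
  intro x
  rw [ENNReal.toReal_mul, hmap x]
  rfl

lemma rho'_le_one (x : Omega M) : rho' ρ x ≤ 1 := by
  rw [rho']
  have h := ρ.coe_le_one x
  calc (ρ x).toReal ≤ (1 : ℝ≥0∞).toReal := ENNReal.toReal_mono ENNReal.one_ne_top h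
    _ = 1 := ENNReal.toReal_one

lemma summable_cDf (hM : 2 ≤ M) (c : ℕ → ℝ) (hc : ∀ j, |c j| ≤ 1) (u : Omega M) :
    Summable fun j => c j * Df M j u := by
  apply summable_of_geo_bound hM 2
  intro j
  rw [abs_mul]
  calc |c j| * |Df M j u| ≤ 1 * (2 * ((M:ℝ)⁻¹)^j) :=
        mul_le_mul (hc j) (abs_Df_le hM j u) (abs_nonneg _) zero_le_one
    _ = 2 * ((M:ℝ)⁻¹)^j := by ring

lemma tsum_cDf (hM : 2 ≤ M) (c : ℕ → ℝ) (hc : ∀ j, |c j| ≤ 1) (u : Omega M) :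
    ∑' j, c j * Df M j u
      = (if hnorm u = 0 then 0 else -c (hnorm u - 1) * ((M:ℝ) ^ hnorm u)⁻¹)
        + ((M:ℝ) - 1) * ∑' i, c (hnorm u + i) * ((M:ℝ) ^ (hnorm u + i + 1))⁻¹ := by
  have hMpos := M_pos hM
  set k := hnorm u with hk
  have hS := summable_cDf hM c hc u
  rw [← Summable.sum_add_tsum_nat_add k hS]
  congr 1
  · -- finite part
    by_cases hk0 : k = 0
    · rw [hk0]
      simp
    · rw [if_neg hk0]
      rw [Finset.sum_eq_single (k - 1)]
      · have h1 : ¬ (k ≤ k - 1) := by omega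
        have h2 : k - 1 + 1 = k := by omega
        simp only [Df, Af, h2, ← hk, if_neg h1, if_pos le_rfl]
        ring
      · intro j hj hne
        rw [Finset.mem_range] at hj
        have h1 : ¬ (k ≤ j) := by omega
        have h2 : ¬ (k ≤ j + 1) := by omega
        simp [Df, Af, h1, h2, ← hk]
      · intro h
        exact absurd (Finset.mem_range.mpr (by omega)) h
  · -- tail
    rw [← tsum_mul_left]
    apply tsum_congr
    intro i
    have h1 : k ≤ i + k := by omega
    have h2 : k ≤ i + k + 1 := by omega
    simp only [Df, Af, ← hk, if_pos h1, if_pos h2]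
    have h3 : i + k = k + i := by omega
    have h4 : i + k + 1 = k + i + 1 := by omega
    rw [h3]
    have h5 : ((M:ℝ) ^ (k + i)) ≠ 0 := by positivity
    have h6 : ((M:ℝ) ^ (k + i + 1)) ≠ 0 := by positivity
    field_simp
    ring

lemma tsum_pow_inv (hM : 2 ≤ M) (k : ℕ) :
    ∑' i : ℕ, ((M:ℝ) ^ (k + i + 1))⁻¹ = ((M:ℝ) ^ (k + 1))⁻¹ * (1 - (M:ℝ)⁻¹)⁻¹ := by
  have hMpos := M_pos hM
  have h : ∀ i : ℕ, ((M:ℝ) ^ (k + i + 1))⁻¹ = ((M:ℝ) ^ (k + 1))⁻¹ * ((M:ℝ)⁻¹)^i := by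
    intro i
    rw [show k + i + 1 = (k + 1) + i by omega, pow_add, mul_inv, inv_pow]
  rw [tsum_congr h, tsum_mul_left, geo_tsum hM]

end Walk

section Series
variable {M : ℕ} [NeZero M] (ρ : PMF (Omega M)) (r : ℕ → ℝ)

lemma walk_series (hM : 2 ≤ M) (hr0 : ∀ j, 0 ≤ r j) (hρ0 : ρ 0 = 0)
    (hρ : ∀ y : Omega M, y ≠ 0 →
      ρ y = ENNReal.ofReal (r (hnorm y) / ((M : ℝ) ^ (hnorm y - 1) * ((M : ℝ) - 1))))
    (hsummable : Summable fun j : ℕ => r (j + 1))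
    (hsum : ∑' j : ℕ, r (j + 1) = 1) :
    ∀ n (u : Omega M),
      ((walk ρ n) u).toReal = ∑' j, (fcoef M r (j + 1)) ^ n * Df M j u := by
  have hMpos := M_pos hM
  have hM1 := M1_pos hM
  have hfc : ∀ j n : ℕ, |(fcoef M r (j + 1)) ^ n| ≤ 1 := fun j n =>
    abs_fcoef_pow_le_one r hM hr0 hsummable hsum j n
  intro n
  induction n with
  | zero =>
    intro u
    rw [walk_zero_real]
    have h := tsum_cDf hM (fun _ => 1) (by intro j; simp) u
    simp only [pow_zero, one_mul] at h ⊢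
    rw [h, tsum_pow_inv hM (hnorm u)]
    by_cases h0 : u = 0
    · rw [if_pos h0, if_pos (by rw [h0]; exact hnorm_eq_zero_iff.mpr rfl)]
      have hk0 : hnorm u = 0 := by rw [h0]; exact hnorm_eq_zero_iff.mpr rfl
      rw [hk0]
      field_simp
      ring
    · rw [if_neg h0, if_neg (fun hc => h0 (hnorm_eq_zero_iff.mp hc))]
      have hMk : ((M:ℝ) ^ hnorm u) ≠ 0 := by positivity
      field_simp
      ring
  | succ n ih =>
    intro u
    rw [walk_succ_real]
    set g : ℕ → ℝ := fun j => (fcoef M r (j + 1)) ^ n with hg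
    set F : ℕ → Omega M → ℝ := fun j x => g j * Df M j x * rho' ρ (u - x) with hF
    have hstep1 : ∀ x : Omega M,
        ((walk ρ n) x).toReal * rho' ρ (u - x) = ∑' j, F j x := by
      intro x
      rw [ih x, ← tsum_mul_right]
    have hslice : ∀ j, Summable (F j) := by
      intro j
      have h1 : Summable fun x => Df M j x * rho' ρ (u - x) := by
        have := (summable_Af_mul ρ j u).sub (summable_Af_mul ρ (j+1) u)
        apply this.congr
        intro x
        rw [Df, sub_mul]
      have := h1.mul_left (g j)
      apply this.congr
      intro x
      rw [hF]
      ring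
    have hbound : ∀ j x, |F j x| ≤ 2 * ((M:ℝ)⁻¹)^j * rho' ρ (u - x) := by
      intro j x
      rw [hF]
      simp only []
      rw [abs_mul, abs_mul]
      rw [abs_of_nonneg (rho'_nonneg ρ _)]
      apply mul_le_mul_of_nonneg_right _ (rho'_nonneg ρ _)
      calc |g j| * |Df M j x| ≤ 1 * (2 * ((M:ℝ)⁻¹)^j) :=
            mul_le_mul (hfc j n) (abs_Df_le hM j x) (abs_nonneg _) zero_le_one
        _ = 2 * ((M:ℝ)⁻¹)^j := by ring
    have hcol : ∀ x, Summable fun j => F j x := by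
      intro x
      apply summable_of_geo_bound hM 2
      intro j
      calc |F j x| ≤ 2 * ((M:ℝ)⁻¹)^j * rho' ρ (u - x) := hbound j x
        _ ≤ 2 * ((M:ℝ)⁻¹)^j * 1 := by
            apply mul_le_mul_of_nonneg_left (rho'_le_one ρ _) (by positivity)
        _ = 2 * ((M:ℝ)⁻¹)^j := by ring
    have huncurry : Summable (Function.uncurry F) := by
      have hnn : 0 ≤ fun p : ℕ × Omega M => |F p.1 p.2| := fun p => abs_nonneg _
      have habs : Summable fun p : ℕ × Omega M => |F p.1 p.2| := by
        rw [summable_prod_of_nonneg hnn]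
        constructor
        · intro j
          exact (hslice j).abs
        · apply Summable.of_nonneg_of_le (fun j => tsum_nonneg fun x => abs_nonneg _)
            (fun j => ?_) ((geo_summable hM).mul_left 2)
          calc (∑' x, |F j x|) ≤ ∑' x, 2 * ((M:ℝ)⁻¹)^j * rho' ρ (u - x) :=
                Summable.tsum_le_tsum (hbound j) (hslice j).abs
                  (((rho'_sub_summable ρ u).mul_left _))
            _ = 2 * ((M:ℝ)⁻¹)^j * ∑' x, rho' ρ (u - x) := tsum_mul_left
            _ = 2 * ((M:ℝ)⁻¹)^j := by rw [rho'_sub_tsum ρ u]; ring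
      exact habs.of_abs
    rw [tsum_congr hstep1, Summable.tsum_comm' huncurry hslice hcol]
    apply tsum_congr
    intro j
    have hinner : ∑' x, F j x = g j * (fcoef M r (j + 1) * Df M j u) := by
      have h1 : ∀ x, F j x = g j * (Df M j x * rho' ρ (u - x)) := by
        intro x; rw [hF]; ring
      rw [tsum_congr h1, tsum_mul_left,
        conv_Df ρ r hM hr0 hρ0 hρ hsummable hsum j u]
    rw [hinner, hg]
    ring

end Series

section Assemble
variable {M : ℕ} [NeZero M] (ρ : PMF (Omega M)) (r : ℕ → ℝ)

lemma abs_fcoef_pow_le_one' (hM : 2 ≤ M) (hr0 : ∀ j, 0 ≤ r j)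
    (hsummable : Summable fun j : ℕ => r (j + 1))
    (hsum : ∑' j : ℕ, r (j + 1) = 1) {m : ℕ} (hm : 1 ≤ m) (n : ℕ) :
    |(fcoef M r m) ^ n| ≤ 1 := by
  obtain ⟨k, rfl⟩ : ∃ k, m = k + 1 := ⟨m - 1, by omega⟩
  exact abs_fcoef_pow_le_one r hM hr0 hsummable hsum k n

lemma toMeasure_finset (p : PMF (Omega M)) (s : Set (Omega M)) (S : Finset (Omega M))
    (h : ∀ x, x ∈ s ↔ x ∈ S) :
    (p.toMeasure s).toReal = ∑ x ∈ S, (p x).toReal := by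
  rw [PMF.toMeasure_apply p (s := s) MeasurableSpace.measurableSet_top]
  have hne : ∀ x, s.indicator (⇑p) x ≠ ⊤ := by
    intro x
    by_cases hx : x ∈ s
    · rw [Set.indicator_of_mem hx]; exact p.apply_ne_top x
    · rw [Set.indicator_of_notMem hx]; exact ENNReal.zero_ne_top
  rw [ENNReal.tsum_toReal_eq hne]
  rw [tsum_eq_sum (s := S) (fun x hx => by
    rw [Set.indicator_of_notMem (fun hs => hx ((h x).mp hs))]
    simp)]
  apply Finset.sum_congr rfl
  intro x hx
  rw [Set.indicator_of_mem ((h x).mpr hx)]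

lemma sum_Af_ball (hM : 2 ≤ M) (L m : ℕ) :
    ∑ x ∈ ballF M L, Af M m x = (M:ℝ)^(min L m) * ((M:ℝ)^m)⁻¹ := by
  have hMpos := M_pos hM
  rcases le_total L m with h | h
  · rw [min_eq_left h]
    have hc : ∀ x ∈ ballF M L, Af M m x = ((M:ℝ)^m)⁻¹ := by
      intro x hx
      rw [mem_ballF] at hx
      rw [Af, if_pos (by omega)]
    rw [Finset.sum_congr rfl hc, Finset.sum_const, card_ballF, nsmul_eq_mul]
    push_cast
    ring
  · rw [min_eq_right h]
    rw [← Finset.sum_subset (ballF_mono h) (fun x hx1 hx2 => by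
      rw [mem_ballF] at hx1
      rw [mem_ballF] at hx2
      rw [Af, if_neg (by omega)])]
    have hc : ∀ x ∈ ballF M m, Af M m x = ((M:ℝ)^m)⁻¹ := by
      intro x hx
      rw [mem_ballF] at hx
      rw [Af, if_pos hx]
    rw [Finset.sum_congr rfl hc, Finset.sum_const, card_ballF, nsmul_eq_mul]
    push_cast
    ring

lemma sum_Df_ball (hM : 2 ≤ M) (L j : ℕ) :
    ∑ x ∈ ballF M L, Df M j x
      = if j < L then 0 else (M:ℝ)^L * ((M:ℝ) - 1) * ((M:ℝ)^(j+1))⁻¹ := by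
  have hMpos := M_pos hM
  have h1 : ∑ x ∈ ballF M L, Df M j x
      = (M:ℝ)^(min L j) * ((M:ℝ)^j)⁻¹ - (M:ℝ)^(min L (j+1)) * ((M:ℝ)^(j+1))⁻¹ := by
    rw [← sum_Af_ball hM L j, ← sum_Af_ball hM L (j+1), ← Finset.sum_sub_distrib]
    rfl
  rw [h1]
  by_cases h : j < L
  · rw [if_pos h, min_eq_right (by omega : j ≤ L), min_eq_right (by omega : j + 1 ≤ L)]
    have h5 : ((M:ℝ) ^ j) ≠ 0 := by positivity
    have h6 : ((M:ℝ) ^ (j+1)) ≠ 0 := by positivity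
    field_simp
    ring
  · rw [if_neg h, min_eq_left (by omega : L ≤ j), min_eq_left (by omega : L ≤ j + 1)]
    have h5 : ((M:ℝ) ^ j) ≠ 0 := by positivity
    have h6 : ((M:ℝ) ^ (j+1)) ≠ 0 := by positivity
    rw [pow_succ]
    field_simp

lemma ball_walk_sum (hM : 2 ≤ M) (hr0 : ∀ j, 0 ≤ r j) (hρ0 : ρ 0 = 0)
    (hρ : ∀ y : Omega M, y ≠ 0 →
      ρ y = ENNReal.ofReal (r (hnorm y) / ((M : ℝ) ^ (hnorm y - 1) * ((M : ℝ) - 1))))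
    (hsummable : Summable fun j : ℕ => r (j + 1))
    (hsum : ∑' j : ℕ, r (j + 1) = 1) (n L : ℕ) :
    ∑ x ∈ ballF M L, ((walk ρ n) x).toReal
      = ((M:ℝ) - 1) * ∑' i, (fcoef M r (L + 1 + i)) ^ n * ((M:ℝ)^(i+1))⁻¹ := by
  have hMpos := M_pos hM
  have hM1 := M1_pos hM
  have hfc : ∀ j : ℕ, |(fcoef M r (j + 1)) ^ n| ≤ 1 := fun j =>
    abs_fcoef_pow_le_one r hM hr0 hsummable hsum j n
  have hterm : ∀ x ∈ ballF M L, ((walk ρ n) x).toReal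
      = ∑' j, (fcoef M r (j + 1)) ^ n * Df M j x := fun x _ =>
    walk_series ρ r hM hr0 hρ0 hρ hsummable hsum n x
  rw [Finset.sum_congr rfl hterm]
  rw [← Summable.tsum_finsetSum (fun x _ => summable_cDf hM _ hfc x)]
  have hsw : ∀ j : ℕ, ∑ x ∈ ballF M L, (fcoef M r (j + 1)) ^ n * Df M j x
      = (fcoef M r (j + 1)) ^ n *
        (if j < L then 0 else (M:ℝ)^L * ((M:ℝ) - 1) * ((M:ℝ)^(j+1))⁻¹) := by
    intro j
    rw [← Finset.mul_sum, sum_Df_ball hM L j]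
  rw [tsum_congr hsw]
  have hsummable2 : Summable fun j => (fcoef M r (j + 1)) ^ n *
      (if j < L then 0 else (M:ℝ)^L * ((M:ℝ) - 1) * ((M:ℝ)^(j+1))⁻¹) := by
    apply summable_of_geo_bound hM ((M:ℝ)^L * ((M:ℝ) - 1))
    intro j
    rw [abs_mul]
    by_cases h : j < L
    · rw [if_pos h]
      simp only [abs_zero, mul_zero]
      positivity
    · rw [if_neg h]
      have hb : |(M:ℝ)^L * ((M:ℝ) - 1) * ((M:ℝ)^(j+1))⁻¹|
          = (M:ℝ)^L * ((M:ℝ) - 1) * ((M:ℝ)^(j+1))⁻¹ := abs_of_nonneg (by positivity)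
      rw [hb]
      have hle : ((M:ℝ)^(j+1))⁻¹ ≤ ((M:ℝ)⁻¹)^j := by
        rw [← inv_pow, pow_succ]
        have : ((M:ℝ)⁻¹)^j * (M:ℝ)⁻¹ ≤ ((M:ℝ)⁻¹)^j * 1 := by
          apply mul_le_mul_of_nonneg_left _ (by positivity)
          rw [inv_le_one_iff₀]; right; exact_mod_cast by omega
        linarith
      calc |(fcoef M r (j+1)) ^ n| * ((M:ℝ)^L * ((M:ℝ) - 1) * ((M:ℝ)^(j+1))⁻¹)
          ≤ 1 * ((M:ℝ)^L * ((M:ℝ) - 1) * ((M:ℝ)⁻¹)^j) := by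
            apply mul_le_mul (hfc j) _ (by positivity) zero_le_one
            apply mul_le_mul_of_nonneg_left hle (by positivity)
        _ = (M:ℝ)^L * ((M:ℝ) - 1) * ((M:ℝ)⁻¹)^j := by ring
  rw [← Summable.sum_add_tsum_nat_add L hsummable2]
  have hz : ∑ j ∈ Finset.range L, (fcoef M r (j + 1)) ^ n *
      (if j < L then 0 else (M:ℝ)^L * ((M:ℝ) - 1) * ((M:ℝ)^(j+1))⁻¹) = 0 := by
    apply Finset.sum_eq_zero
    intro j hj
    rw [Finset.mem_range] at hj
    rw [if_pos hj, mul_zero]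
  rw [hz, zero_add, ← tsum_mul_left]
  apply tsum_congr
  intro i
  rw [if_neg (by omega)]
  have h1 : i + L + 1 = L + 1 + i := by omega
  rw [h1]
  have h2 : (M:ℝ)^(L+1+i) = (M:ℝ)^L * (M:ℝ)^(i+1) := by
    rw [← pow_add]
    congr 1
    omega
  rw [h2]
  have h5 : ((M:ℝ) ^ L) ≠ 0 := by positivity
  have h6 : ((M:ℝ) ^ (i+1)) ≠ 0 := by positivity
  field_simp

end Assemble

end HRW

open HRW

/-- Fourier representation of the hierarchical random walk:
`P(ξ_n = u) = -f_k^n/M^k + (M-1) Σ_{j>k} f_j^n/M^j` when `|u| = k > 0`; consequently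
`P(|ξ_n| = k) = ((M-1)/M) Σ_{j≥0} (f_{j+k+1}^n - f_{j+k}^n)/M^j` and
`P(|ξ_n| > L) = ((M-1)/M) Σ_{j≥0} (1 - f_{L+j+1}^n)/M^j`. -/
theorem walk_fourier_representation (M : ℕ) (hM : 2 ≤ M) (r : ℕ → ℝ)
    (hr0 : ∀ j : ℕ, 0 ≤ r j) (hrz : r 0 = 0)
    (hsummable : Summable fun j : ℕ => r (j + 1))
    (hsum : ∑' j : ℕ, r (j + 1) = 1)
    (ρ : PMF (Omega M)) (hρ0 : ρ 0 = 0)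
    (hρ : ∀ y : Omega M, y ≠ 0 →
      ρ y = ENNReal.ofReal
        (r (hnorm y) / ((M : ℝ) ^ (hnorm y - 1) * ((M : ℝ) - 1))))
    (n : ℕ) :
    (∀ (u : Omega M) (k : ℕ), hnorm u = k → 0 < k →
      ((walk ρ n) u).toReal =
        -(fcoef M r k) ^ n / (M : ℝ) ^ k +
          ((M : ℝ) - 1) * ∑' j : ℕ, (fcoef M r (k + 1 + j)) ^ n / (M : ℝ) ^ (k + 1 + j)) ∧
    (∀ k : ℕ, 0 < k →
      ((walk ρ n).toMeasure {x : Omega M | hnorm x = k}).toReal =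
        (((M : ℝ) - 1) / M) *
          ∑' j : ℕ, ((fcoef M r (j + k + 1)) ^ n - (fcoef M r (j + k)) ^ n) / (M : ℝ) ^ j) ∧
    (∀ L : ℕ,
      ((walk ρ n).toMeasure {x : Omega M | L < hnorm x}).toReal =
        (((M : ℝ) - 1) / M) *
          ∑' j : ℕ, (1 - (fcoef M r (L + j + 1)) ^ n) / (M : ℝ) ^ j) := by
  haveI : NeZero M := ⟨by omega⟩
  have hMpos := M_pos hM
  have hM1 := M1_pos hM
  have hM0 : (M:ℝ) ≠ 0 := ne_of_gt hMpos
  have hM1' : (M:ℝ) - 1 ≠ 0 := ne_of_gt hM1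
  have hfc : ∀ j : ℕ, |(fcoef M r (j + 1)) ^ n| ≤ 1 := fun j =>
    abs_fcoef_pow_le_one r hM hr0 hsummable hsum j n
  set S : ℕ → ℝ := fun L => ∑' i : ℕ, (fcoef M r (L + 1 + i)) ^ n * ((M:ℝ)^(i+1))⁻¹ with hS
  have hball : ∀ L, ∑ x ∈ ballF M L, ((walk ρ n) x).toReal = ((M:ℝ) - 1) * S L := fun L =>
    ball_walk_sum ρ r hM hr0 hρ0 hρ hsummable hsum n L
  have hSsummable : ∀ m : ℕ, Summable fun j : ℕ => (fcoef M r (j + m + 1)) ^ n / (M:ℝ)^j := by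
    intro m
    apply summable_of_geo_bound hM 1
    intro j
    rw [div_eq_mul_inv, abs_mul, one_mul, ← inv_pow, abs_of_nonneg (by positivity : (0:ℝ) ≤ ((M:ℝ)⁻¹)^j)]
    calc |(fcoef M r (j + m + 1)) ^ n| * ((M:ℝ)⁻¹)^j
        ≤ 1 * ((M:ℝ)⁻¹)^j := mul_le_mul_of_nonneg_right
          (abs_fcoef_pow_le_one' r hM hr0 hsummable hsum (by omega) n) (by positivity)
      _ = ((M:ℝ)⁻¹)^j := one_mul _
  have hApart : ∀ m : ℕ, ∑' j : ℕ, (fcoef M r (j + m + 1)) ^ n / (M:ℝ)^j = (M:ℝ) * S m := by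
    intro m
    rw [hS, ← tsum_mul_left]
    apply tsum_congr
    intro j
    rw [show j + m + 1 = m + 1 + j by omega]
    have h6 : ((M:ℝ) ^ (j+1)) ≠ 0 := by positivity
    rw [div_eq_mul_inv, pow_succ]
    field_simp
  refine ⟨?_, ?_, ?_⟩
  · intro u k hk hk0
    have h1 := (walk_series ρ r hM hr0 hρ0 hρ hsummable hsum n u).trans
      (tsum_cDf hM (fun j => (fcoef M r (j + 1)) ^ n) hfc u)
    rw [h1, hk, if_neg (by omega)]
    congr 1
    · rw [show k - 1 + 1 = k by omega, div_eq_mul_inv, neg_mul]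
    · congr 1
      apply tsum_congr
      intro j
      rw [show k + j + 1 = k + 1 + j by omega, div_eq_mul_inv]
  · intro k hk0
    have hmem : ∀ x : Omega M, x ∈ {x : Omega M | hnorm x = k}
        ↔ x ∈ ballF M k \ ballF M (k - 1) := by
      intro x
      simp only [Set.mem_setOf_eq, Finset.mem_sdiff, mem_ballF]
      omega
    rw [toMeasure_finset _ _ _ hmem]
    have h2 := Finset.sum_sdiff (f := fun x => ((walk ρ n) x).toReal)
      (ballF_mono (show k - 1 ≤ k by omega))
    have h3 : ∑ x ∈ ballF M k \ ballF M (k-1), ((walk ρ n) x).toReal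
        = ((M:ℝ) - 1) * S k - ((M:ℝ) - 1) * S (k-1) := by
      have hb1 := hball k
      have hb2 := hball (k-1)
      linarith
    rw [h3]
    have hsub : ∀ j : ℕ, ((fcoef M r (j + k + 1)) ^ n - (fcoef M r (j + k)) ^ n) / (M:ℝ)^j
        = (fcoef M r (j + k + 1)) ^ n / (M:ℝ)^j - (fcoef M r (j + (k-1) + 1)) ^ n / (M:ℝ)^j := by
      intro j
      rw [show j + (k-1) + 1 = j + k by omega, sub_div]
    rw [tsum_congr hsub, Summable.tsum_sub (hSsummable k) (hSsummable (k-1)), hApart k, hApart (k-1)]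
    field_simp
  · intro L
    have hsetc : {x : Omega M | L < hnorm x} = {x : Omega M | hnorm x ≤ L}ᶜ := by
      ext x
      simp [not_le]
    haveI : MeasureTheory.IsProbabilityMeasure ((walk ρ n).toMeasure) :=
      PMF.toMeasure.isProbabilityMeasure _
    rw [hsetc, MeasureTheory.prob_compl_eq_one_sub MeasurableSpace.measurableSet_top]
    rw [ENNReal.toReal_sub_of_le MeasureTheory.prob_le_one ENNReal.one_ne_top, ENNReal.toReal_one]
    rw [toMeasure_finset _ _ (ballF M L) (fun x => by
      simp only [Set.mem_setOf_eq, mem_ballF])]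
    rw [hball L]
    have hgeo1 : Summable fun j : ℕ => (1:ℝ) / (M:ℝ)^j :=
      (geo_summable hM).congr (fun j => by rw [one_div, inv_pow])
    have hgeo : ∑' j : ℕ, (1:ℝ) / (M:ℝ)^j = (1 - (M:ℝ)⁻¹)⁻¹ := by
      rw [← geo_tsum hM]
      exact tsum_congr fun j => by rw [one_div, inv_pow]
    have hsub : ∀ j : ℕ, (1 - (fcoef M r (L + j + 1)) ^ n) / (M:ℝ)^j
        = 1 / (M:ℝ)^j - (fcoef M r (j + L + 1)) ^ n / (M:ℝ)^j := by
      intro j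
      rw [show j + L + 1 = L + j + 1 by omega, sub_div]
    rw [tsum_congr hsub, Summable.tsum_sub hgeo1 (hSsummable L), hgeo, hApart L]
    have hinv : (1 - (M:ℝ)⁻¹)⁻¹ = (M:ℝ) / ((M:ℝ) - 1) := by
      rw [show 1 - (M:ℝ)⁻¹ = ((M:ℝ) - 1) / M by field_simp, inv_div]
    rw [hinv]
    field_simp
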